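/- arXiv:2101.00534 — 3 statements merged into one kernel-verified Lean document; each statement's English description precedes it below -/
import Mathlib

section
/- Let $0 < a < b < 1$. For every nonzero real $\alpha$ and for $p_{1,N}(n) = n/N^a$, $p_{2,N}(n) = n/N^b$, every non-trivial linear combination $\lambda_1 p_{1,N} + \lambda_2 p_{2,N}$ (with $(\lambda_1,\lambda_2) \neq (0,0)$) satisfies $\lim_{N\to\infty} \frac{1}{N}\sum_{n=1}^N e^{i(\lambda_1 p_{1,N}(n) + \lambda_2 p_{2,N}(n))\alpha} = 0$. -/
open Filter Finset Real

lemma key_geom_bound (θ : ℝ) (h1 : |θ| ≤ π / 2) (h0 : θ ≠ 0) (N : ℕ) :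
    ‖∑ n ∈ Finset.Icc 1 N, Complex.exp (Complex.I * ((n * θ : ℝ) : ℂ))‖ ≤ π / |θ| := by
  set z : ℂ := Complex.exp ((θ : ℂ) * Complex.I) with hz
  have hθpos : 0 < |θ| := abs_pos.mpr h0
  have hsin : (2 / π) * |θ| ≤ |Real.sin θ| := by
    have h := Real.mul_le_sin (abs_nonneg θ) h1
    have hsabs : Real.sin |θ| ≤ |Real.sin θ| := by
      rcases abs_cases θ with ⟨he, _⟩ | ⟨he, _⟩
      · rw [he]; exact le_abs_self _
      · rw [he, Real.sin_neg]; exact neg_le_abs _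
    linarith
  have him : (z - 1).im = Real.sin θ := by
    simp [hz, Complex.exp_ofReal_mul_I_im]
  have hlow : (2 / π) * |θ| ≤ ‖z - 1‖ := by
    calc (2 / π) * |θ| ≤ |Real.sin θ| := hsin
      _ = |(z - 1).im| := by rw [him]
      _ ≤ ‖z - 1‖ := Complex.abs_im_le_norm _
      _ = ‖z - 1‖ := rfl
  have hlowpos : 0 < (2 / π) * |θ| := by positivity
  have hz1 : z ≠ 1 := by
    intro h
    rw [h] at hlow
    simp at hlow
    linarith
  have hsum : ∑ n ∈ Finset.Icc 1 N, Complex.exp (Complex.I * ((n * θ : ℝ) : ℂ))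
      = (z ^ (N + 1) - z ^ 1) / (z - 1) := by
    rw [← Finset.Ico_add_one_right_eq_Icc, ← geom_sum_Ico hz1 (by omega)]
    refine Finset.sum_congr rfl fun n _ => ?_
    rw [hz, ← Complex.exp_nat_mul]
    congr 1
    push_cast
    ring
  rw [hsum]
  have hzabs : ‖z‖ = 1 := by
    rw [hz]; exact Complex.norm_exp_ofReal_mul_I θ
  have h2 : ‖z ^ (N + 1) - z ^ 1‖ ≤ 2 := by
    calc ‖z ^ (N + 1) - z ^ 1‖ ≤ ‖z ^ (N + 1)‖ + ‖z ^ 1‖ := norm_sub_le _ _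
      _ = 1 + 1 := by rw [norm_pow, norm_pow, hzabs]; norm_num
      _ = 2 := by norm_num
  calc ‖(z ^ (N + 1) - z ^ 1) / (z - 1)‖ = ‖z ^ (N + 1) - z ^ 1‖ / ‖z - 1‖ := norm_div _ _
    _ ≤ 2 / ((2 / π) * |θ|) := by gcongr
    _ = π / |θ| := by
        rw [div_mul_eq_div_div]
        congr 1
        rw [div_div_eq_mul_div]
        field_simp

lemma aux_tendsto_atTop (a b : ℝ) (ha : 0 < a) (hab : a < b) (hb : b < 1)
    (l1 l2 : ℝ) (hl : l1 ≠ 0 ∨ l2 ≠ 0) :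
    Tendsto (fun N : ℕ => |l1 * (N : ℝ) ^ (1 - a) + l2 * (N : ℝ) ^ (1 - b)|)
      atTop atTop := by
  by_cases hl1 : l1 = 0
  · have hl2 : l2 ≠ 0 := by tauto
    subst hl1
    have h : Tendsto (fun N : ℕ => |l2| * (N : ℝ) ^ (1 - b)) atTop atTop :=
        ((tendsto_rpow_atTop (by linarith)).comp tendsto_natCast_atTop_atTop).const_mul_atTop
        (abs_pos.mpr hl2)
    refine h.congr fun N => ?_
    rw [zero_mul, zero_add, abs_mul, abs_of_nonneg (Real.rpow_nonneg (Nat.cast_nonneg N) _)]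
  · have hpow : Tendsto (fun N : ℕ => (N : ℝ) ^ (1 - a)) atTop atTop :=
      (tendsto_rpow_atTop (by linarith)).comp tendsto_natCast_atTop_atTop
    have hsmall : Tendsto (fun N : ℕ => l2 * (N : ℝ) ^ (a - b)) atTop (nhds 0) := by
      have h0 : Tendsto (fun N : ℕ => (N : ℝ) ^ (a - b)) atTop (nhds 0) := by
        have := (tendsto_rpow_neg_atTop (by linarith : (0:ℝ) < b - a)).comp
          tendsto_natCast_atTop_atTop
        simpa [neg_sub, Function.comp_def] using this
      simpa using h0.const_mul l2
    have hev : ∀ᶠ N : ℕ in atTop, |l1| / 2 ≤ |l1 + l2 * (N : ℝ) ^ (a - b)| := by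
      have habs : Tendsto (fun N : ℕ => |l2 * (N : ℝ) ^ (a - b)|) atTop (nhds 0) := by
        simpa using hsmall.abs
      filter_upwards [habs.eventually_le_const (by positivity : (0:ℝ) < |l1| / 2)] with N hN
      have h3 := abs_add_le (l1 + l2 * (N : ℝ) ^ (a - b)) (-(l2 * (N : ℝ) ^ (a - b)))
      simp only [add_neg_cancel_right, abs_neg] at h3
      linarith
    have hmin : Tendsto (fun N : ℕ => (N : ℝ) ^ (1 - a) * (|l1| / 2)) atTop atTop :=
      hpow.atTop_mul_const (by positivity)
    refine tendsto_atTop_mono' _ ?_ hmin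
    filter_upwards [hev, eventually_ge_atTop 1] with N hN hN1
    have hNpos : (0:ℝ) < N := by exact_mod_cast hN1
    have hid : l1 * (N : ℝ) ^ (1 - a) + l2 * (N : ℝ) ^ (1 - b)
        = (N : ℝ) ^ (1 - a) * (l1 + l2 * (N : ℝ) ^ (a - b)) := by
      rw [mul_add, ← mul_assoc, mul_comm ((N:ℝ) ^ (1-a)) l2, mul_assoc,
        ← Real.rpow_add hNpos]
      have he : 1 - a + (a - b) = 1 - b := by ring
      rw [he]
      ring
    rw [hid, abs_mul, abs_of_nonneg (Real.rpow_nonneg hNpos.le _)]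
    gcongr

/-- For `0 < a < b < 1`, every non-trivial linear combination of the variable
polynomials `p_{1,N}(n) = n/N^a` and `p_{2,N}(n) = n/N^b` is a good polynomial sequence:
for every nonzero real `α`, `(1/N) ∑_{n=1}^N e^{i(λ₁ p_{1,N}(n) + λ₂ p_{2,N}(n))α} → 0`. -/
theorem stmt1 (a b : ℝ) (ha : 0 < a) (hab : a < b) (hb : b < 1)
    (l1 l2 : ℝ) (hl : (l1, l2) ≠ (0, 0)) (α : ℝ) (hα : α ≠ 0) :
    Tendsto (fun N : ℕ => (N : ℂ)⁻¹ *
        ∑ n ∈ Finset.Icc 1 N, Complex.exp (Complex.I *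
          (((l1 * ((n : ℝ) / (N : ℝ) ^ a) + l2 * ((n : ℝ) / (N : ℝ) ^ b)) * α : ℝ) : ℂ)))
      atTop (nhds 0) := by
  have hl' : l1 ≠ 0 ∨ l2 ≠ 0 := by
    by_contra h
    push_neg at h
    exact hl (by simp [h.1, h.2])
  set θ : ℕ → ℝ := fun N => (l1 / (N : ℝ) ^ a + l2 / (N : ℝ) ^ b) * α with hθdef
  -- θ → 0
  have hθ0 : Tendsto θ atTop (nhds 0) := by
    have hA : Tendsto (fun N : ℕ => (N : ℝ) ^ a) atTop atTop :=
      (tendsto_rpow_atTop ha).comp tendsto_natCast_atTop_atTop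
    have hB : Tendsto (fun N : ℕ => (N : ℝ) ^ b) atTop atTop :=
      (tendsto_rpow_atTop (by linarith)).comp tendsto_natCast_atTop_atTop
    have h1 : Tendsto (fun N : ℕ => l1 / (N : ℝ) ^ a) atTop (nhds 0) :=
      tendsto_const_nhds.div_atTop hA
    have h2 : Tendsto (fun N : ℕ => l2 / (N : ℝ) ^ b) atTop (nhds 0) :=
      tendsto_const_nhds.div_atTop hB
    simpa using (h1.add h2).mul_const α
  -- N * |θ N| → ∞
  have hg : Tendsto (fun N : ℕ => (N : ℝ) * |θ N|) atTop atTop := by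
    have H := aux_tendsto_atTop a b ha hab hb l1 l2 hl'
    have H2 : Tendsto (fun N : ℕ =>
        |α| * |l1 * (N : ℝ) ^ (1 - a) + l2 * (N : ℝ) ^ (1 - b)|) atTop atTop :=
      H.const_mul_atTop (abs_pos.mpr hα)
    refine H2.congr' ?_
    filter_upwards [eventually_ge_atTop 1] with N hN1
    have hNpos : (0:ℝ) < N := by exact_mod_cast hN1
    have hid : (N : ℝ) * θ N = (l1 * (N : ℝ) ^ (1 - a) + l2 * (N : ℝ) ^ (1 - b)) * α := by
      have e1 : (N : ℝ) / (N : ℝ) ^ a = (N : ℝ) ^ (1 - a) := by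
        rw [Real.rpow_sub hNpos, Real.rpow_one]
      have e2 : (N : ℝ) / (N : ℝ) ^ b = (N : ℝ) ^ (1 - b) := by
        rw [Real.rpow_sub hNpos, Real.rpow_one]
      rw [hθdef]
      field_simp
      rw [← e1, ← e2]
      field_simp
    rw [mul_comm (|α|), ← abs_mul, ← hid, abs_mul, abs_of_pos hNpos]
  -- conclude by squeezing
  have hbound : Tendsto (fun N : ℕ => Real.pi / ((N : ℝ) * |θ N|)) atTop (nhds 0) :=
    tendsto_const_nhds.div_atTop hg
  refine squeeze_zero_norm' ?_ hbound
  have hθabs : Tendsto (fun N : ℕ => |θ N|) atTop (nhds 0) := by simpa using hθ0.abs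
  filter_upwards [hθabs.eventually_le_const (by positivity : (0:ℝ) < Real.pi / 2),
    hg.eventually_ge_atTop 1, eventually_ge_atTop 1] with N h1 h2 hN1
  have hNpos : (0:ℝ) < N := by exact_mod_cast hN1
  have hθne : θ N ≠ 0 := by
    intro h
    rw [h] at h2
    simp at h2
    linarith
  have hsum : ∑ n ∈ Finset.Icc 1 N, Complex.exp (Complex.I *
        (((l1 * ((n : ℝ) / (N : ℝ) ^ a) + l2 * ((n : ℝ) / (N : ℝ) ^ b)) * α : ℝ) : ℂ))
      = ∑ n ∈ Finset.Icc 1 N, Complex.exp (Complex.I * ((n * θ N : ℝ) : ℂ)) := by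
    refine Finset.sum_congr rfl fun n _ => ?_
    congr 2
    norm_cast
    rw [hθdef]
    ring
  rw [hsum, norm_mul, norm_inv, Complex.norm_natCast]
  have hkey := key_geom_bound (θ N) h1 hθne N
  calc ((N:ℝ))⁻¹ * ‖∑ n ∈ Finset.Icc 1 N, Complex.exp (Complex.I * ((n * θ N : ℝ) : ℂ))‖
      ≤ ((N:ℝ))⁻¹ * (Real.pi / |θ N|) := by gcongr
    _ = Real.pi / ((N : ℝ) * |θ N|) := by
        rw [mul_comm, ← div_eq_mul_inv, div_div, mul_comm |θ N|]
end

section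
/- Let $(h(N))_N$ be a sequence of nonzero reals with $h(N) \to 0$ and $|h(N)| \cdot N \to \infty$ as $N \to \infty$. Then for every nonzero real $\alpha$, $\lim_{N\to\infty} \frac{1}{N}\sum_{n=0}^{N-1} e^{i \alpha h(N) n} = 0$. -/
open Filter Finset

lemma abs_exp_I_sub_one (θ : ℝ) :
    ‖Complex.exp (Complex.I * θ) - 1‖ = 2 * |Real.sin (θ / 2)| := by
  rw [mul_comm, Complex.exp_mul_I]
  have h1 : ‖Complex.cos θ + Complex.sin θ * Complex.I - 1‖
      = Real.sqrt ((Real.cos θ - 1) ^ 2 + Real.sin θ ^ 2) := by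
    rw [Complex.norm_def, Complex.normSq_apply]
    simp [Complex.cos_ofReal_re, Complex.sin_ofReal_re, sq]
  rw [h1]
  have h2 : (Real.cos θ - 1) ^ 2 + Real.sin θ ^ 2 = (2 * |Real.sin (θ / 2)|) ^ 2 := by
    have hs : Real.sin (θ / 2) ^ 2 = 1 / 2 - Real.cos (2 * (θ / 2)) / 2 :=
      Real.sin_sq_eq_half_sub _
    have h2' : (2 : ℝ) * (θ / 2) = θ := by ring
    rw [h2'] at hs
    have hpyth := Real.sin_sq_add_cos_sq θ
    rw [mul_pow, sq_abs]
    nlinarith [hs]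
  rw [h2, Real.sqrt_sq (by positivity)]

lemma lower_bound (θ : ℝ) (hθ : |θ| ≤ Real.pi) :
    2 * |θ| / Real.pi ≤ ‖Complex.exp (Complex.I * θ) - 1‖ := by
  rw [abs_exp_I_sub_one]
  have hπ := Real.pi_pos
  have h1 : 2 / Real.pi * |θ / 2| ≤ Real.sin |θ / 2| := by
    apply Real.mul_le_sin (abs_nonneg _)
    rw [abs_div]
    simp only [abs_two]
    linarith [abs_nonneg θ]
  have h2 : Real.sin |θ / 2| ≤ |Real.sin (θ / 2)| := by
    rcases abs_choice (θ / 2) with h | h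
    · rw [h]; exact le_abs_self _
    · rw [h, Real.sin_neg]; exact neg_le_abs _
  have h3 : 2 * |θ| / Real.pi = 2 * (2 / Real.pi * |θ / 2|) := by
    rw [abs_div, abs_two]; field_simp
  rw [h3]
  nlinarith [h1, h2]

/-- If `h(N)` are nonzero reals with `h(N) → 0` and `|h(N)|·N → ∞`, then for
every nonzero real `α`, `(1/N) ∑_{n=0}^{N-1} e^{iαh(N)n} → 0`. -/
theorem stmt2 (h : ℕ → ℝ) (hne : ∀ N, h N ≠ 0)
    (h0 : Tendsto h atTop (nhds 0))
    (hinf : Tendsto (fun N : ℕ => |h N| * N) atTop atTop)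
    (α : ℝ) (hα : α ≠ 0) :
    Tendsto (fun N : ℕ => (N : ℂ)⁻¹ *
        ∑ n ∈ Finset.range N, Complex.exp (Complex.I * ((α * h N * n : ℝ) : ℂ)))
      atTop (nhds 0) := by
  have hπ := Real.pi_pos
  have hαpos : 0 < |α| := abs_pos.mpr hα
  set g : ℕ → ℝ := fun N => Real.pi / (|α| * (|h N| * N)) with hg
  have hgto : Tendsto g atTop (nhds 0) := by
    apply Tendsto.div_atTop tendsto_const_nhds
    exact Tendsto.const_mul_atTop hαpos hinf
  apply squeeze_zero_norm' _ hgto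
  have hev : ∀ᶠ N in atTop, |α * h N| ≤ Real.pi := by
    have habs : ∀ᶠ N in atTop, |h N| < Real.pi / |α| := by
      have := h0.abs
      simp only [abs_zero] at this
      exact this.eventually_lt_const (by positivity)
    filter_upwards [habs] with N hN
    rw [abs_mul]
    calc |α| * |h N| ≤ |α| * (Real.pi / |α|) :=
          mul_le_mul_of_nonneg_left hN.le (abs_nonneg α)
      _ = Real.pi := by field_simp
  filter_upwards [hev] with N hN
  set θ : ℝ := α * h N with hθdef
  have hθne : θ ≠ 0 := mul_ne_zero hα (hne N)
  have hθabs : 0 < |θ| := abs_pos.mpr hθne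
  set z : ℂ := Complex.exp (Complex.I * θ) with hz
  have hlb : 2 * |θ| / Real.pi ≤ ‖z - 1‖ := lower_bound θ hN
  have hzne : z ≠ 1 := by
    intro heq
    rw [heq] at hlb
    simp at hlb
    have : (0:ℝ) < 2 * |θ| / Real.pi := by positivity
    linarith
  have hsum : ∑ n ∈ Finset.range N, Complex.exp (Complex.I * ((α * h N * n : ℝ) : ℂ))
      = (z ^ N - 1) / (z - 1) := by
    rw [← geom_sum_eq hzne]
    apply Finset.sum_congr rfl
    intro n _
    rw [hz, ← Complex.exp_nat_mul, hθdef]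
    congr 1
    push_cast
    ring
  rw [hsum]
  rw [norm_mul, norm_inv, norm_div]
  have hz1 : ‖z‖ = 1 := by
    rw [hz, mul_comm]
    exact Complex.norm_exp_ofReal_mul_I θ
  have hnum : ‖z ^ N - 1‖ ≤ 2 := by
    calc ‖z ^ N - 1‖ ≤ ‖z ^ N‖ + ‖(1:ℂ)‖ := norm_sub_le _ _
      _ = 1 + 1 := by rw [norm_pow]; simp [hz1]
      _ = 2 := by norm_num
  have hden : (0:ℝ) < 2 * |θ| / Real.pi := by positivity
  have step1 : ‖z ^ N - 1‖ / ‖z - 1‖ ≤ 2 / (2 * |θ| / Real.pi) :=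
    div_le_div₀ (by norm_num) hnum hden hlb
  have step2 : (2:ℝ) / (2 * |θ| / Real.pi) = Real.pi / |θ| := by
    field_simp
  have hNnorm : ‖(N:ℂ)‖ = (N:ℝ) := by
    simp
  rw [hNnorm]
  calc ((N:ℝ))⁻¹ * (‖z ^ N - 1‖ / ‖z - 1‖)
      ≤ ((N:ℝ))⁻¹ * (Real.pi / |θ|) := by
        apply mul_le_mul_of_nonneg_left _ (by positivity)
        rw [← step2]; exact step1
    _ = g N := by
        rw [hg]
        simp only
        rw [hθdef, abs_mul]
        rcases Nat.eq_zero_or_pos N with rfl | hN0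
        · simp
        · have hN' : (0:ℝ) < N := by exact_mod_cast hN0
          field_simp
end

section
/- Let $(v_{N,n})_{N,n}$ be a bounded doubly-indexed sequence in a Hilbert space $H$. Then $\limsup_{N\to\infty} \left\| \frac{1}{N}\sum_{n=1}^N v_{N,n} \right\|^2 \leq 4 \limsup_{H_0\to\infty} \frac{1}{H_0}\sum_{h=1}^{H_0} \limsup_{N\to\infty} \left| \frac{1}{N}\sum_{n=1}^N \langle v_{N,n+h}, v_{N,n} \rangle \right|$. -/
open Filter Finset

section aux
variable {M : Type*} [NormedAddCommGroup M]

lemma shift_sum (F : ℕ → M) (a N : ℕ) :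
    ∑ n ∈ Finset.Ioc 0 N, F (n + a) = ∑ m ∈ Finset.Ioc a (N + a), F m := by
  have h : Finset.Ioc a (N + a) = (Finset.Ioc 0 N).map (addRightEmbedding a) := by
    rw [Finset.map_add_right_Ioc, Nat.zero_add]
  rw [h, Finset.sum_map]
  rfl

lemma shift_diff (F : ℕ → M) (a N : ℕ) :
    ∑ n ∈ Finset.Ioc 0 N, F (n + a) - ∑ n ∈ Finset.Ioc 0 N, F n
      = ∑ m ∈ Finset.Ioc N (N + a), F m - ∑ m ∈ Finset.Ioc 0 a, F m := by
  rw [shift_sum]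
  have h1 : ∑ m ∈ Finset.Ioc 0 a, F m + ∑ m ∈ Finset.Ioc a (N + a), F m
      = ∑ m ∈ Finset.Ioc 0 (N + a), F m :=
    Finset.sum_Ioc_consecutive _ (Nat.zero_le a) (Nat.le_add_left a N)
  have h2 : ∑ m ∈ Finset.Ioc 0 N, F m + ∑ m ∈ Finset.Ioc N (N + a), F m
      = ∑ m ∈ Finset.Ioc 0 (N + a), F m :=
    Finset.sum_Ioc_consecutive _ (Nat.zero_le N) (Nat.le_add_right N a)
  have := h1.trans h2.symm
  abel_nf
  abel_nf at this
  linear_combination (norm := abel) this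

lemma shift_diff_norm (F : ℕ → M) (a N : ℕ) (K : ℝ) (hK : ∀ m, ‖F m‖ ≤ K) :
    ‖∑ n ∈ Finset.Ioc 0 N, F (n + a) - ∑ n ∈ Finset.Ioc 0 N, F n‖ ≤ 2 * a * K := by
  rw [shift_diff]
  calc ‖∑ m ∈ Finset.Ioc N (N + a), F m - ∑ m ∈ Finset.Ioc 0 a, F m‖
      ≤ ‖∑ m ∈ Finset.Ioc N (N + a), F m‖ + ‖∑ m ∈ Finset.Ioc 0 a, F m‖ := norm_sub_le _ _
    _ ≤ a * K + a * K := by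
        gcongr <;>
        · refine (norm_sum_le _ _).trans ?_
          refine (Finset.sum_le_sum fun i _ => hK i).trans ?_
          rw [Finset.sum_const, Nat.card_Ioc, nsmul_eq_mul]
          simp
    _ = 2 * a * K := by ring
end aux

section inner
variable {E : Type*} [NormedAddCommGroup E] [InnerProductSpace ℂ E]
variable (u : ℕ → E) (C : ℝ)

lemma inner_bd (hC : 0 ≤ C) (hu : ∀ n, ‖u n‖ ≤ C) (m k : ℕ) :
    ‖(inner ℂ (u m) (u k) : ℂ)‖ ≤ C ^ 2 := by
  refine (norm_inner_le_norm _ _).trans ?_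
  have h1 := hu m
  have h2 := hu k
  have := norm_nonneg (u m)
  have := norm_nonneg (u k)
  nlinarith

lemma corr_shift (hC : 0 ≤ C) (hu : ∀ n, ‖u n‖ ≤ C) (a d N : ℕ) :
    ‖∑ n ∈ Finset.Ioc 0 N, (inner ℂ (u (n + a + d)) (u (n + a)) : ℂ)‖
      ≤ ‖∑ n ∈ Finset.Ioc 0 N, (inner ℂ (u (n + d)) (u n) : ℂ)‖ + 2 * a * C ^ 2 := by
  have key := shift_diff_norm (fun m => (inner ℂ (u (m + d)) (u m) : ℂ)) a N (C ^ 2)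
    (fun m => inner_bd u C hC hu _ _)
  have := norm_sub_norm_le (∑ n ∈ Finset.Ioc 0 N, (inner ℂ (u (n + a + d)) (u (n + a)) : ℂ))
    (∑ n ∈ Finset.Ioc 0 N, (inner ℂ (u (n + d)) (u n) : ℂ))
  linarith
end inner

section pair
variable {E : Type*} [NormedAddCommGroup E] [InnerProductSpace ℂ E]
variable (u : ℕ → E) (C : ℝ)

lemma pair_bound (hC : 0 ≤ C) (hu : ∀ n, ‖u n‖ ≤ C) (N H : ℕ) {h h' : ℕ}
    (hh : h < H) (hh' : h' < H) (hne : h ≠ h') :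
    (∑ n ∈ Finset.Ioc 0 N, (inner ℂ (u (n + h)) (u (n + h')) : ℂ)).re
      ≤ ‖∑ n ∈ Finset.Ioc 0 N,
          (inner ℂ (u (n + (max h h' - min h h'))) (u n) : ℂ)‖ + 2 * H * C ^ 2 := by
  have main : ∀ a b : ℕ, b < a → a < H →
      (∑ n ∈ Finset.Ioc 0 N, (inner ℂ (u (n + a)) (u (n + b)) : ℂ)).re
        ≤ ‖∑ n ∈ Finset.Ioc 0 N, (inner ℂ (u (n + (a - b))) (u n) : ℂ)‖
            + 2 * H * C ^ 2 := by
    intro a b hba haH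
    have hre : ∀ z : ℂ, z.re ≤ ‖z‖ := fun z => Complex.re_le_norm z
    have hEq : ∑ n ∈ Finset.Ioc 0 N, (inner ℂ (u (n + a)) (u (n + b)) : ℂ)
        = ∑ n ∈ Finset.Ioc 0 N, (inner ℂ (u (n + b + (a - b))) (u (n + b)) : ℂ) := by
      refine Finset.sum_congr rfl fun n _ => ?_
      congr 2
      omega
    calc (∑ n ∈ Finset.Ioc 0 N, (inner ℂ (u (n + a)) (u (n + b)) : ℂ)).re
        ≤ ‖∑ n ∈ Finset.Ioc 0 N, (inner ℂ (u (n + a)) (u (n + b)) : ℂ)‖ := hre _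
      _ = ‖∑ n ∈ Finset.Ioc 0 N,
            (inner ℂ (u (n + b + (a - b))) (u (n + b)) : ℂ)‖ := by rw [hEq]
      _ ≤ ‖∑ n ∈ Finset.Ioc 0 N, (inner ℂ (u (n + (a - b))) (u n) : ℂ)‖
            + 2 * b * C ^ 2 := corr_shift u C hC hu b (a - b) N
      _ ≤ _ := by
          have : (b : ℝ) ≤ (H : ℝ) := by exact_mod_cast (le_of_lt (lt_trans hba haH))
          nlinarith
  rcases lt_or_gt_of_ne hne with hlt | hgt
  · -- h < h' : use conjugation
    have hconj : (∑ n ∈ Finset.Ioc 0 N, (inner ℂ (u (n + h)) (u (n + h')) : ℂ))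
        = starRingEnd ℂ (∑ n ∈ Finset.Ioc 0 N, (inner ℂ (u (n + h')) (u (n + h)) : ℂ)) := by
      rw [map_sum]
      exact Finset.sum_congr rfl fun n _ => (inner_conj_symm _ _).symm
    rw [hconj, Complex.conj_re]
    have := main h' h hlt hh'
    have hmm : max h h' - min h h' = h' - h := by omega
    rw [hmm]
    exact this
  · have := main h h' hgt hh
    have hmm : max h h' - min h h' = h - h' := by omega
    rw [hmm]
    exact this

lemma counting (q : ℕ → ℝ) (hq : ∀ d, 0 ≤ q d) (H h : ℕ) (hh : h < H) :
    ∑ h' ∈ (Finset.range H).erase h, q (max h h' - min h h')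
      ≤ 2 * ∑ d ∈ Finset.Icc 1 H, q d := by
  have hsplit : (Finset.range H).erase h = Finset.range h ∪ Finset.Ico (h + 1) H := by
    ext x
    simp only [Finset.mem_erase, Finset.mem_range, Finset.mem_union, Finset.mem_Ico]
    omega
  have hdisj : Disjoint (Finset.range h) (Finset.Ico (h + 1) H) := by
    rw [Finset.disjoint_left]
    intro x hx hx'
    simp only [Finset.mem_range] at hx
    simp only [Finset.mem_Ico] at hx'
    omega
  rw [hsplit, Finset.sum_union hdisj]
  have bound : ∀ (s : Finset ℕ) (φ : ℕ → ℕ), Set.InjOn φ s → (∀ x ∈ s, φ x ∈ Finset.Icc 1 H) →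
      ∑ x ∈ s, q (φ x) ≤ ∑ d ∈ Finset.Icc 1 H, q d := by
    intro s φ hinj hmem
    rw [← Finset.sum_image (fun x hx y hy hxy => hinj hx hy hxy)]
    refine Finset.sum_le_sum_of_subset_of_nonneg ?_ (fun i _ _ => hq i)
    intro y hy
    rw [Finset.mem_image] at hy
    obtain ⟨x, hx, rfl⟩ := hy
    exact hmem x hx
  have b1 : ∑ h' ∈ Finset.range h, q (max h h' - min h h') ≤ ∑ d ∈ Finset.Icc 1 H, q d := by
    have : ∑ h' ∈ Finset.range h, q (max h h' - min h h')
        = ∑ h' ∈ Finset.range h, q (h - h') := by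
      refine Finset.sum_congr rfl fun x hx => ?_
      rw [Finset.mem_range] at hx
      congr 1
      omega
    rw [this]
    refine bound _ (fun h' => h - h') ?_ ?_
    · intro x hx y hy hxy
      simp only [Finset.coe_range, Set.mem_Iio] at hx hy
      dsimp only at hxy
      omega
    · intro x hx
      rw [Finset.mem_range] at hx
      rw [Finset.mem_Icc]
      omega
  have b2 : ∑ h' ∈ Finset.Ico (h + 1) H, q (max h h' - min h h')
      ≤ ∑ d ∈ Finset.Icc 1 H, q d := by
    have : ∑ h' ∈ Finset.Ico (h + 1) H, q (max h h' - min h h')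
        = ∑ h' ∈ Finset.Ico (h + 1) H, q (h' - h) := by
      refine Finset.sum_congr rfl fun x hx => ?_
      rw [Finset.mem_Ico] at hx
      congr 1
      omega
    rw [this]
    refine bound _ (fun h' => h' - h) ?_ ?_
    · intro x hx y hy hxy
      simp only [Finset.coe_Ico, Set.mem_Ico] at hx hy
      dsimp only at hxy
      omega
    · intro x hx
      rw [Finset.mem_Ico] at hx
      rw [Finset.mem_Icc]
      omega
  linarith
end pair

section key
variable {E : Type*} [NormedAddCommGroup E] [InnerProductSpace ℂ E]

set_option maxHeartbeats 1000000 in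
lemma key_ineq (u : ℕ → E) (C : ℝ) (hC : 0 ≤ C) (hu : ∀ n, ‖u n‖ ≤ C)
    (N H : ℕ) (hN : 1 ≤ N) (hH : 1 ≤ H) :
    ‖(N : ℝ)⁻¹ • ∑ n ∈ Finset.Ioc 0 N, u n‖ ^ 2
      ≤ C ^ 2 / H + (2 / H) * ∑ d ∈ Finset.Icc 1 H,
          (N : ℝ)⁻¹ * ‖∑ n ∈ Finset.Ioc 0 N, (inner ℂ (u (n + d)) (u n) : ℂ)‖
        + 6 * C ^ 2 * H / N := by
  have hN0 : (0:ℝ) < N := by exact_mod_cast hN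
  have hH0 : (0:ℝ) < H := by exact_mod_cast hH
  set W : ℕ → E := fun n => ∑ h ∈ Finset.range H, u (n + h) with hW
  set S : E := ∑ n ∈ Finset.Ioc 0 N, u n with hS
  set A : E := (N:ℝ)⁻¹ • S with hA
  set B : E := ((N:ℝ)⁻¹ * (H:ℝ)⁻¹) • ∑ n ∈ Finset.Ioc 0 N, W n with hB
  have hnormsmul : ∀ (c : ℝ) (x : E), 0 ≤ c → ‖c • x‖ = c * ‖x‖ := fun c x hc => by
    rw [norm_smul, Real.norm_eq_abs, abs_of_nonneg hc]
  have hsum_le : ∀ (s : Finset ℕ) (f : ℕ → E) (K : ℝ), (∀ i ∈ s, ‖f i‖ ≤ K) →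
      ‖∑ i ∈ s, f i‖ ≤ s.card * K := fun s f K hf =>
    (norm_sum_le _ _).trans ((Finset.sum_le_sum hf).trans (by
      rw [Finset.sum_const, nsmul_eq_mul]))
  have cardIoc : (Finset.Ioc 0 N).card = N := by simp [Nat.card_Ioc]
  have hWle : ∀ n, ‖W n‖ ≤ H * C := fun n => by
    simpa [Finset.card_range] using
      hsum_le (Finset.range H) (fun h => u (n + h)) C (fun i _ => hu _)
  have hAle : ‖A‖ ≤ C := by
    rw [hA, hnormsmul _ _ (by positivity)]
    have h1 := hsum_le (Finset.Ioc 0 N) u C (fun i _ => hu i)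
    rw [cardIoc] at h1
    calc (N:ℝ)⁻¹ * ‖S‖ ≤ (N:ℝ)⁻¹ * ((N:ℝ) * C) := by gcongr
      _ = C := by field_simp
  have hBle : ‖B‖ ≤ C := by
    rw [hB, hnormsmul _ _ (by positivity)]
    have h1 := hsum_le (Finset.Ioc 0 N) W ((H:ℝ) * C) (fun i _ => hWle i)
    rw [cardIoc] at h1
    calc ((N:ℝ)⁻¹ * (H:ℝ)⁻¹) * ‖∑ n ∈ Finset.Ioc 0 N, W n‖
        ≤ ((N:ℝ)⁻¹ * (H:ℝ)⁻¹) * ((N:ℝ) * ((H:ℝ) * C)) := by gcongr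
      _ = C := by field_simp
  have hABdiff : ‖A - B‖ ≤ 2 * H * C / N := by
    have e1 : ∑ h ∈ Finset.range H, (S - ∑ n ∈ Finset.Ioc 0 N, u (n + h))
        = (H:ℝ) • S - ∑ n ∈ Finset.Ioc 0 N, W n := by
      rw [Finset.sum_sub_distrib, Finset.sum_const, Finset.card_range]
      congr 1
      · rw [← Nat.cast_smul_eq_nsmul ℝ]
      · exact Finset.sum_comm
    have e2 : A - B = ((N:ℝ)⁻¹ * (H:ℝ)⁻¹) •
        ∑ h ∈ Finset.range H, (S - ∑ n ∈ Finset.Ioc 0 N, u (n + h)) := by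
      rw [e1, smul_sub, hA, hB, smul_smul]
      congr 2
      field_simp
    rw [e2, hnormsmul _ _ (by positivity)]
    have e3 : ‖∑ h ∈ Finset.range H, (S - ∑ n ∈ Finset.Ioc 0 N, u (n + h))‖
        ≤ (H:ℝ) * (2 * H * C) := by
      have := hsum_le (Finset.range H) (fun h => S - ∑ n ∈ Finset.Ioc 0 N, u (n + h))
        (2 * H * C) (fun h hh => by
          rw [norm_sub_rev]
          refine (shift_diff_norm u h N C hu).trans ?_
          have : (h:ℝ) ≤ (H:ℝ) := by
            rw [Finset.mem_range] at hh; exact_mod_cast hh.le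
          nlinarith)
      simpa [Finset.card_range] using this
    calc ((N:ℝ)⁻¹ * (H:ℝ)⁻¹) * ‖∑ h ∈ Finset.range H, (S - ∑ n ∈ Finset.Ioc 0 N, u (n + h))‖
        ≤ ((N:ℝ)⁻¹ * (H:ℝ)⁻¹) * ((H:ℝ) * (2 * H * C)) := by gcongr
      _ = 2 * H * C / N := by field_simp
  have step1 : ‖A‖ ^ 2 ≤ ‖B‖ ^ 2 + 4 * C ^ 2 * H / N := by
    have p1 : (‖A‖ - ‖B‖) * (‖A‖ + ‖B‖) ≤ ‖A - B‖ * (‖A‖ + ‖B‖) :=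
      mul_le_mul_of_nonneg_right (norm_sub_norm_le A B)
        (by positivity)
    have p2 : ‖A - B‖ * (‖A‖ + ‖B‖) ≤ (2 * H * C / N) * (2 * C) := by
      refine mul_le_mul hABdiff (by linarith) (by positivity) (by positivity)
    have q1 : (‖A‖ - ‖B‖) * (‖A‖ + ‖B‖) = ‖A‖ ^ 2 - ‖B‖ ^ 2 := by ring
    have q2 : 2 * (H:ℝ) * C / N * (2 * C) = 4 * C ^ 2 * H / N := by ring
    linarith [p1, p2]
  have step2 : ‖B‖ ^ 2 ≤ (N:ℝ)⁻¹ * ∑ n ∈ Finset.Ioc 0 N, ((H:ℝ)⁻¹ * ‖W n‖) ^ 2 := by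
    have h1 : ‖B‖ ≤ (N:ℝ)⁻¹ * ∑ n ∈ Finset.Ioc 0 N, ((H:ℝ)⁻¹ * ‖W n‖) := by
      rw [hB, hnormsmul _ _ (by positivity)]
      calc ((N:ℝ)⁻¹ * (H:ℝ)⁻¹) * ‖∑ n ∈ Finset.Ioc 0 N, W n‖
          ≤ ((N:ℝ)⁻¹ * (H:ℝ)⁻¹) * ∑ n ∈ Finset.Ioc 0 N, ‖W n‖ := by
            gcongr
            exact norm_sum_le _ _
        _ = (N:ℝ)⁻¹ * ∑ n ∈ Finset.Ioc 0 N, ((H:ℝ)⁻¹ * ‖W n‖) := by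
            rw [mul_assoc, Finset.mul_sum]
    have h2 := sq_sum_le_card_mul_sum_sq (s := Finset.Ioc 0 N)
      (f := fun n => (H:ℝ)⁻¹ * ‖W n‖)
    rw [cardIoc] at h2
    calc ‖B‖ ^ 2 ≤ ((N:ℝ)⁻¹ * ∑ n ∈ Finset.Ioc 0 N, ((H:ℝ)⁻¹ * ‖W n‖)) ^ 2 :=
          pow_le_pow_left₀ (norm_nonneg B) h1 2
      _ = (N:ℝ)⁻¹ ^ 2 * (∑ n ∈ Finset.Ioc 0 N, ((H:ℝ)⁻¹ * ‖W n‖)) ^ 2 := mul_pow _ _ 2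
      _ ≤ (N:ℝ)⁻¹ ^ 2 * ((N:ℝ) * ∑ n ∈ Finset.Ioc 0 N, ((H:ℝ)⁻¹ * ‖W n‖) ^ 2) := by
          gcongr
      _ = (N:ℝ)⁻¹ * ∑ n ∈ Finset.Ioc 0 N, ((H:ℝ)⁻¹ * ‖W n‖) ^ 2 := by
          rw [sq]
          rw [mul_assoc]
          congr 1
          rw [← mul_assoc, inv_mul_cancel₀ (ne_of_gt hN0), one_mul]
  have expand : ∀ n, ((H:ℝ)⁻¹ * ‖W n‖) ^ 2 = (H:ℝ)⁻¹ ^ 2 *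
      ∑ h ∈ Finset.range H, ∑ h' ∈ Finset.range H,
        ((inner ℂ (u (n + h)) (u (n + h')) : ℂ)).re := by
    intro n
    rw [mul_pow]
    congr 1
    have e1 : (inner ℂ (W n) (W n) : ℂ)
        = ∑ h ∈ Finset.range H, ∑ h' ∈ Finset.range H,
            (inner ℂ (u (n + h)) (u (n + h')) : ℂ) := by
      rw [hW]
      rw [sum_inner]
      exact Finset.sum_congr rfl fun h _ => inner_sum _ _ _
    have e2 : ‖W n‖ ^ 2 = (inner ℂ (W n) (W n) : ℂ).re := by
      rw [inner_self_eq_norm_sq_to_K (𝕜 := ℂ)]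
      simp [← Complex.ofReal_pow]
    rw [e2, e1, Complex.re_sum]
    exact Finset.sum_congr rfl fun h _ => Complex.re_sum _ _
  set q : ℕ → ℝ := fun d =>
    ‖∑ n ∈ Finset.Ioc 0 N, (inner ℂ (u (n + d)) (u n) : ℂ)‖ with hq
  have hq0 : ∀ d, 0 ≤ q d := fun d => norm_nonneg _
  set Q : ℝ := ∑ d ∈ Finset.Icc 1 H, q d with hQdef
  have hQ0 : 0 ≤ Q := Finset.sum_nonneg fun d _ => hq0 d
  set P : ℕ → ℕ → ℝ := fun h h' =>
    ∑ n ∈ Finset.Ioc 0 N, ((inner ℂ (u (n + h)) (u (n + h')) : ℂ)).re with hP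
  have swap : ∑ n ∈ Finset.Ioc 0 N, ∑ h ∈ Finset.range H, ∑ h' ∈ Finset.range H,
      ((inner ℂ (u (n + h)) (u (n + h')) : ℂ)).re
      = ∑ h ∈ Finset.range H, ∑ h' ∈ Finset.range H, P h h' := by
    rw [Finset.sum_comm]
    exact Finset.sum_congr rfl fun h _ => Finset.sum_comm
  have diag : ∀ h : ℕ, P h h ≤ N * C ^ 2 := by
    intro h
    have hterm : ∀ n ∈ Finset.Ioc 0 N, ((inner ℂ (u (n + h)) (u (n + h)) : ℂ)).re ≤ C ^ 2 := by
      intro n _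
      rw [inner_self_eq_norm_sq_to_K (𝕜 := ℂ)]
      have hx := hu (n + h)
      have h0 := norm_nonneg (u (n + h))
      simp [← Complex.ofReal_pow]
      nlinarith
    refine (Finset.sum_le_sum hterm).trans ?_
    rw [Finset.sum_const, cardIoc, nsmul_eq_mul]
  have perh : ∀ h ∈ Finset.range H, ∑ h' ∈ Finset.range H, P h h'
      ≤ N * C ^ 2 + (2 * Q + H * (2 * H * C ^ 2)) := by
    intro h hhmem
    have hh : h < H := Finset.mem_range.1 hhmem
    rw [← Finset.add_sum_erase _ _ hhmem]
    have off : ∑ h' ∈ (Finset.range H).erase h, P h h'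
        ≤ 2 * Q + H * (2 * H * C ^ 2) := by
      have step : ∑ h' ∈ (Finset.range H).erase h, P h h'
          ≤ ∑ h' ∈ (Finset.range H).erase h,
              (q (max h h' - min h h') + 2 * H * C ^ 2) := by
        refine Finset.sum_le_sum fun h' hh' => ?_
        rw [Finset.mem_erase] at hh'
        have hb := pair_bound u C hC hu N H hh (Finset.mem_range.1 hh'.2) (Ne.symm hh'.1)
        simp only [hP, hq]
        rw [← Complex.re_sum]
        exact hb
      refine step.trans ?_
      rw [Finset.sum_add_distrib, Finset.sum_const, nsmul_eq_mul]
      have c1 := counting q hq0 H h hh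
      have c2 : ((Finset.range H).erase h).card ≤ H :=
        Finset.card_erase_le.trans (le_of_eq (Finset.card_range H))
      have c2' : (((Finset.range H).erase h).card : ℝ) ≤ H := by exact_mod_cast c2
      have c3 : (0:ℝ) ≤ 2 * (H:ℝ) * C ^ 2 := by positivity
      nlinarith [c1]
    linarith [diag h, off]
  have total : ∑ h ∈ Finset.range H, ∑ h' ∈ Finset.range H, P h h'
      ≤ H * (N * C ^ 2 + (2 * Q + H * (2 * H * C ^ 2))) := by
    refine (Finset.sum_le_sum perh).trans ?_
    rw [Finset.sum_const, Finset.card_range, nsmul_eq_mul]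
  calc ‖A‖ ^ 2 ≤ ‖B‖ ^ 2 + 4 * C ^ 2 * H / N := step1
    _ ≤ (N:ℝ)⁻¹ * ∑ n ∈ Finset.Ioc 0 N, ((H:ℝ)⁻¹ * ‖W n‖) ^ 2 + 4 * C ^ 2 * H / N := by
        linarith [step2]
    _ = (N:ℝ)⁻¹ * ((H:ℝ)⁻¹ ^ 2 * (∑ h ∈ Finset.range H, ∑ h' ∈ Finset.range H, P h h'))
          + 4 * C ^ 2 * H / N := by
        rw [show (∑ n ∈ Finset.Ioc 0 N, ((H:ℝ)⁻¹ * ‖W n‖) ^ 2)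
            = ∑ n ∈ Finset.Ioc 0 N, (H:ℝ)⁻¹ ^ 2 *
                ∑ h ∈ Finset.range H, ∑ h' ∈ Finset.range H,
                  ((inner ℂ (u (n + h)) (u (n + h')) : ℂ)).re
            from Finset.sum_congr rfl fun n _ => expand n]
        rw [← Finset.mul_sum, swap]
    _ ≤ (N:ℝ)⁻¹ * ((H:ℝ)⁻¹ ^ 2 * ((H:ℝ) * ((N:ℝ) * C ^ 2 + (2 * Q + (H:ℝ) * (2 * H * C ^ 2)))))
          + 4 * C ^ 2 * H / N := by
        gcongr
    _ = C ^ 2 / H + (2 / H) * ∑ d ∈ Finset.Icc 1 H,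
          (N:ℝ)⁻¹ * ‖∑ n ∈ Finset.Ioc 0 N, (inner ℂ (u (n + d)) (u n) : ℂ)‖
          + 6 * C ^ 2 * H / N := by
        have e : ∑ d ∈ Finset.Icc 1 H, (N:ℝ)⁻¹ *
            ‖∑ n ∈ Finset.Ioc 0 N, (inner ℂ (u (n + d)) (u n) : ℂ)‖
            = (N:ℝ)⁻¹ * Q := by
          rw [hQdef, Finset.mul_sum]
        rw [e]
        have hHne : (H:ℝ) ≠ 0 := ne_of_gt hH0
        have hNne : (N:ℝ) ≠ 0 := ne_of_gt hN0
        clear_value W S A B q Q P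
        clear e swap diag perh total expand step1 step2 hABdiff hAle hBle hWle hq0 hQ0 hq hQdef hP hW hS hA hB hsum_le hnormsmul hu
        field_simp
        ring


end key

/-- variable van der Corput lemma: for a bounded doubly-indexed sequence
`v` in a Hilbert space,
`limsup_N ‖(1/N)∑_{n=1}^N v_{N,n}‖² ≤
  4 limsup_{H₀} (1/H₀)∑_{h=1}^{H₀} limsup_N |(1/N)∑_{n=1}^N ⟨v_{N,n+h}, v_{N,n}⟩|`. -/
theorem stmt3 {E : Type*} [NormedAddCommGroup E] [InnerProductSpace ℂ E]
    (v : ℕ → ℕ → E) (C : ℝ) (hv : ∀ N n, ‖v N n‖ ≤ C) :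
    Filter.atTop.limsup (fun N : ℕ => ‖(N : ℝ)⁻¹ • ∑ n ∈ Finset.Icc 1 N, v N n‖ ^ 2) ≤
      4 * Filter.atTop.limsup (fun H0 : ℕ => (H0 : ℝ)⁻¹ *
        ∑ h ∈ Finset.Icc 1 H0, Filter.atTop.limsup (fun N : ℕ =>
          ‖(N : ℂ)⁻¹ *
            ∑ n ∈ Finset.Icc 1 N, (inner ℂ (v N (n + h)) (v N n) : ℂ)‖)) := by
  have hC : 0 ≤ C := (norm_nonneg (v 0 0)).trans (hv 0 0)
  have hIcc : ∀ m : ℕ, Finset.Icc 1 m = Finset.Ioc 0 m := by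
    intro m
    ext x
    simp only [Finset.mem_Icc, Finset.mem_Ioc]
    omega
  -- the correlation sequences and their bounds
  have gb : ∀ (h N : ℕ), ‖(N : ℂ)⁻¹ *
      ∑ n ∈ Finset.Icc 1 N, (inner ℂ (v N (n + h)) (v N n) : ℂ)‖ ≤ C ^ 2 := by
    intro h N
    rw [norm_mul, norm_inv, Complex.norm_natCast]
    rcases Nat.eq_zero_or_pos N with rfl | hN
    · simp
      positivity
    · have hb : ‖∑ n ∈ Finset.Icc 1 N, (inner ℂ (v N (n + h)) (v N n) : ℂ)‖
          ≤ N * C ^ 2 := by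
        refine (norm_sum_le _ _).trans ?_
        refine (Finset.sum_le_sum (fun n _ => inner_bd (v N) C hC (hv N) (n + h) n)).trans ?_
        rw [Finset.sum_const, nsmul_eq_mul, Nat.card_Icc]
        simp
      have hN0 : (0:ℝ) < N := by exact_mod_cast hN
      calc (N:ℝ)⁻¹ * ‖∑ n ∈ Finset.Icc 1 N, (inner ℂ (v N (n + h)) (v N n) : ℂ)‖
          ≤ (N:ℝ)⁻¹ * ((N:ℝ) * C ^ 2) := by gcongr
        _ = C ^ 2 := by field_simp
  have gnn : ∀ (h N : ℕ), 0 ≤ ‖(N : ℂ)⁻¹ *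
      ∑ n ∈ Finset.Icc 1 N, (inner ℂ (v N (n + h)) (v N n) : ℂ)‖ :=
    fun h N => norm_nonneg _
  set γ : ℕ → ℝ := fun h => Filter.atTop.limsup (fun N : ℕ =>
    ‖(N : ℂ)⁻¹ *
      ∑ n ∈ Finset.Icc 1 N, (inner ℂ (v N (n + h)) (v N n) : ℂ)‖) with hγdef
  have bddAbove : ∀ h : ℕ, Filter.atTop.IsBoundedUnder (· ≤ ·) (fun N : ℕ =>
      ‖(N : ℂ)⁻¹ * ∑ n ∈ Finset.Icc 1 N, (inner ℂ (v N (n + h)) (v N n) : ℂ)‖) :=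
    fun h => Filter.isBoundedUnder_of ⟨C ^ 2, fun N => gb h N⟩
  have bddBelow : ∀ h : ℕ, Filter.atTop.IsBoundedUnder (· ≥ ·) (fun N : ℕ =>
      ‖(N : ℂ)⁻¹ * ∑ n ∈ Finset.Icc 1 N, (inner ℂ (v N (n + h)) (v N n) : ℂ)‖) :=
    fun h => Filter.isBoundedUnder_of ⟨0, fun N => gnn h N⟩
  have γ_nonneg : ∀ h, 0 ≤ γ h := fun h =>
    Filter.le_limsup_of_frequently_le
      ((Filter.Eventually.of_forall (gnn h)).frequently) (bddAbove h)
  have γ_le : ∀ h, γ h ≤ C ^ 2 := fun h =>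
    Filter.limsup_le_of_le ((bddBelow h).isCoboundedUnder_le)
      (Filter.Eventually.of_forall (gb h))
  -- step 1 : for every H ≥ 1 the limsup is bounded by the finite correlation average
  have key_step : ∀ H : ℕ, 1 ≤ H →
      Filter.atTop.limsup (fun N : ℕ => ‖(N : ℝ)⁻¹ • ∑ n ∈ Finset.Icc 1 N, v N n‖ ^ 2)
        ≤ C ^ 2 / H + (2 / H) * ∑ d ∈ Finset.Icc 1 H, γ d := by
    intro H hH
    have hH0 : (0:ℝ) < H := by exact_mod_cast hH
    refine le_of_forall_pos_le_add fun ε hε => ?_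
    have hε3 : 0 < ε / 3 := by linarith
    have ev1 : ∀ᶠ N : ℕ in Filter.atTop, ∀ d ∈ Finset.Icc 1 H,
        ‖(N : ℂ)⁻¹ *
          ∑ n ∈ Finset.Icc 1 N, (inner ℂ (v N (n + d)) (v N n) : ℂ)‖ ≤ γ d + ε / 3 := by
      rw [Filter.eventually_all_finset]
      intro d _
      have hlt : γ d < γ d + ε / 3 := by linarith
      exact (Filter.eventually_lt_of_limsup_lt hlt (bddAbove d)).mono fun N hN => hN.le
    have ev2 : ∀ᶠ N : ℕ in Filter.atTop, 6 * C ^ 2 * (H:ℝ) / N ≤ ε / 3 := by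
      have ht : Filter.Tendsto (fun N : ℕ => 6 * C ^ 2 * (H:ℝ) / N) Filter.atTop (nhds 0) :=
        tendsto_const_div_atTop_nhds_zero_nat _
      exact (ht.eventually_lt_const hε3).mono fun N hN => hN.le
    have ev3 : ∀ᶠ N : ℕ in Filter.atTop, 1 ≤ N := Filter.eventually_ge_atTop 1
    have evA : ∀ᶠ N : ℕ in Filter.atTop,
        ‖(N : ℝ)⁻¹ • ∑ n ∈ Finset.Icc 1 N, v N n‖ ^ 2
          ≤ C ^ 2 / H + (2 / H) * ∑ d ∈ Finset.Icc 1 H, γ d + ε := by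
      filter_upwards [ev1, ev2, ev3] with N h1 h2 h3
      have key := key_ineq (v N) C hC (hv N) N H h3 hH
      have gconv : ∀ d : ℕ, (N:ℝ)⁻¹ *
          ‖∑ n ∈ Finset.Ioc 0 N, (inner ℂ (v N (n + d)) (v N n) : ℂ)‖
          = ‖(N : ℂ)⁻¹ *
              ∑ n ∈ Finset.Icc 1 N, (inner ℂ (v N (n + d)) (v N n) : ℂ)‖ := by
        intro d
        rw [norm_mul, norm_inv, Complex.norm_natCast, hIcc]
      have hsum : ∑ d ∈ Finset.Icc 1 H, (N:ℝ)⁻¹ *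
          ‖∑ n ∈ Finset.Ioc 0 N, (inner ℂ (v N (n + d)) (v N n) : ℂ)‖
          ≤ ∑ d ∈ Finset.Icc 1 H, (γ d + ε / 3) := by
        refine Finset.sum_le_sum fun d hd => ?_
        rw [gconv d]
        exact h1 d hd
      have hsum2 : ∑ d ∈ Finset.Icc 1 H, (γ d + ε / 3)
          = ∑ d ∈ Finset.Icc 1 H, γ d + H * (ε / 3) := by
        rw [Finset.sum_add_distrib, Finset.sum_const, nsmul_eq_mul, Nat.card_Icc]
        simp
      calc ‖(N : ℝ)⁻¹ • ∑ n ∈ Finset.Icc 1 N, v N n‖ ^ 2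
          = ‖(N : ℝ)⁻¹ • ∑ n ∈ Finset.Ioc 0 N, v N n‖ ^ 2 := by rw [hIcc]
        _ ≤ C ^ 2 / H + (2 / H) * ∑ d ∈ Finset.Icc 1 H,
              (N : ℝ)⁻¹ * ‖∑ n ∈ Finset.Ioc 0 N,
                (inner ℂ (v N (n + d)) (v N n) : ℂ)‖ + 6 * C ^ 2 * H / N := key
        _ ≤ C ^ 2 / H + (2 / H) * (∑ d ∈ Finset.Icc 1 H, γ d + H * (ε / 3)) + ε / 3 := by
            rw [← hsum2]
            gcongr
        _ ≤ C ^ 2 / H + (2 / H) * ∑ d ∈ Finset.Icc 1 H, γ d + ε := by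
            have : (2 / (H:ℝ)) * ((H:ℝ) * (ε / 3)) = 2 * (ε / 3) := by
              field_simp
            rw [mul_add, this]
            linarith
    refine Filter.limsup_le_of_le ?_ evA
    exact (Filter.isBoundedUnder_of ⟨0, fun N => by positivity⟩ :
      Filter.atTop.IsBoundedUnder (· ≥ ·) _).isCoboundedUnder_le
  -- step 2 : the averaged quantity
  set Sav : ℕ → ℝ := fun H0 => (H0 : ℝ)⁻¹ * ∑ h ∈ Finset.Icc 1 H0, γ h with hSavdef
  have Sav_nonneg : ∀ H0, 0 ≤ Sav H0 := by
    intro H0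
    simp only [hSavdef]
    have : 0 ≤ ∑ h ∈ Finset.Icc 1 H0, γ h := Finset.sum_nonneg fun h _ => γ_nonneg h
    positivity
  have Sav_le : ∀ H0, Sav H0 ≤ C ^ 2 := by
    intro H0
    simp only [hSavdef]
    rcases Nat.eq_zero_or_pos H0 with rfl | hH0
    · simp
      positivity
    · have hH0' : (0:ℝ) < H0 := by exact_mod_cast hH0
      have hs : ∑ h ∈ Finset.Icc 1 H0, γ h ≤ H0 * C ^ 2 := by
        refine (Finset.sum_le_sum fun h _ => γ_le h).trans ?_
        rw [Finset.sum_const, nsmul_eq_mul, Nat.card_Icc]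
        simp
      calc (H0:ℝ)⁻¹ * ∑ h ∈ Finset.Icc 1 H0, γ h ≤ (H0:ℝ)⁻¹ * ((H0:ℝ) * C ^ 2) := by gcongr
        _ = C ^ 2 := by field_simp
  have SbddAbove : Filter.atTop.IsBoundedUnder (· ≤ ·) Sav :=
    Filter.isBoundedUnder_of ⟨C ^ 2, Sav_le⟩
  have SbddBelow : Filter.atTop.IsBoundedUnder (· ≥ ·) Sav :=
    Filter.isBoundedUnder_of ⟨0, Sav_nonneg⟩
  have R_nonneg : 0 ≤ Filter.atTop.limsup Sav :=
    Filter.le_limsup_of_frequently_le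
      ((Filter.Eventually.of_forall Sav_nonneg).frequently) SbddAbove
  have hliminf : Filter.atTop.liminf Sav ≤ Filter.atTop.limsup Sav :=
    Filter.liminf_le_limsup SbddAbove SbddBelow
  refine le_of_forall_pos_le_add fun ε hε => ?_
  have hε4 : 0 < ε / 4 := by linarith
  have hfreq : ∃ᶠ H0 in Filter.atTop, Sav H0 < Filter.atTop.limsup Sav + ε / 4 :=
    Filter.frequently_lt_of_liminf_lt (SbddAbove.isCoboundedUnder_ge) (by linarith)
  have hev : ∀ᶠ H0 : ℕ in Filter.atTop, 1 ≤ H0 ∧ C ^ 2 / H0 ≤ ε / 4 := by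
    have ht : Filter.Tendsto (fun H0 : ℕ => C ^ 2 / (H0:ℝ)) Filter.atTop (nhds 0) :=
      tendsto_const_div_atTop_nhds_zero_nat _
    filter_upwards [Filter.eventually_ge_atTop 1,
      (ht.eventually_lt_const hε4).mono fun N hN => hN.le] with H0 h1 h2
    exact ⟨h1, h2⟩
  obtain ⟨H, hSH, hH1, hCH⟩ := (hfreq.and_eventually hev).exists
  have hkey := key_step H hH1
  have hH0 : (0:ℝ) < H := by exact_mod_cast hH1
  have hconv : (2 / (H:ℝ)) * ∑ d ∈ Finset.Icc 1 H, γ d = 2 * Sav H := by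
    simp only [hSavdef]
    field_simp
  calc Filter.atTop.limsup (fun N : ℕ => ‖(N : ℝ)⁻¹ • ∑ n ∈ Finset.Icc 1 N, v N n‖ ^ 2)
      ≤ C ^ 2 / H + (2 / H) * ∑ d ∈ Finset.Icc 1 H, γ d := hkey
    _ = C ^ 2 / H + 2 * Sav H := by rw [hconv]
    _ ≤ ε / 4 + 2 * (Filter.atTop.limsup Sav + ε / 4) := by
        have := hSH.le
        gcongr
    _ ≤ 4 * Filter.atTop.limsup Sav + ε := by linarith
end
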